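/- In no-duplication infinite Mastermind over an uncountable color set Σ, for every countable ordinal γ and every codebreaker strategy, there exist two distinct injective codewords receiving identical feedback (0,0,ω) to all guesses made before stage γ; hence no strategy wins by any countable ordinal stage. -/

import Mathlib

/-- Permutations acting only on the incorrect positions of `s` against `w`. -/
def IncorrectPerm {α : Type*} (s w : ℕ → α) : Type :=
  {π : Equiv.Perm ℕ // ∀ n : ℕ, s n = w n → π n = n}

instance {α : Type*} (s w : ℕ → α) : Nonempty (IncorrectPerm s w) :=
  ⟨⟨Equiv.refl ℕ, fun _ _ => rfl⟩⟩

/-- The rearrangement count `ρ`. -/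
noncomputable def rearrangeCount {α : Type*} (s w : ℕ → α) : Cardinal :=
  ⨆ π : IncorrectPerm s w,
    Cardinal.mk {m : ℕ | s m ≠ w m ∧ s ((π.1).symm m) = w m}

/-- The inherent error count `ε`. -/
noncomputable def errorCount {α : Type*} (s w : ℕ → α) : Cardinal :=
  ⨅ π : IncorrectPerm s w, Cardinal.mk {m : ℕ | s ((π.1).symm m) ≠ w m}

/-- The Mastermind feedback `(κ, ρ, ε)` of the guess `s` against `w`. -/
noncomputable def masterFeedback {α : Type*} (s w : ℕ → α) :
    Cardinal × Cardinal × Cardinal :=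
  (Cardinal.mk {n : ℕ | s n = w n}, rearrangeCount s w, errorCount s w)

/-- If the guess and codeword share no colors, the feedback is `(0,0,ω)`. -/
lemma feedback_of_disjoint {α : Type*} (s w : ℕ → α)
    (h : ∀ n m : ℕ, s n ≠ w m) :
    masterFeedback s w = (0, 0, Cardinal.aleph0) := by
  have hκ : Cardinal.mk {n : ℕ | s n = w n} = 0 := by
    rw [Cardinal.mk_eq_zero_iff]
    exact ⟨fun ⟨n, hn⟩ => h n n hn⟩
  have hρ : rearrangeCount s w = 0 := by
    refine le_antisymm (ciSup_le' fun π => le_of_eq ?_) zero_le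
    exact Cardinal.mk_eq_zero_iff.mpr ⟨fun ⟨m, hm⟩ => h _ m hm.2⟩
  have hε : errorCount s w = Cardinal.aleph0 := by
    have : ∀ π : IncorrectPerm s w,
        Cardinal.mk {m : ℕ | s ((π.1).symm m) ≠ w m} = Cardinal.aleph0 := by
      intro π
      have : {m : ℕ | s ((π.1).symm m) ≠ w m} = Set.univ := by
        ext m; simp [h]
      rw [this, Cardinal.mk_univ, Cardinal.mk_nat]
    unfold errorCount
    simp only [this]
    exact ciInf_const
  unfold masterFeedback
  rw [hκ, hρ, hε]

theorem mastermind_noduplication_no_countable_stage_win (α : Type*)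
    [Uncountable α] (γ : Ordinal.{0}) (hγ : γ.card ≤ Cardinal.aleph0)
    (s : Ordinal.{0} → (ℕ → α)) (hs : ∀ β < γ, Function.Injective (s β)) :
    ∃ c d : ℕ → α, Function.Injective c ∧ Function.Injective d ∧ c ≠ d ∧
      ∀ β < γ, masterFeedback (s β) c = (0, 0, Cardinal.aleph0) ∧
        masterFeedback (s β) d = (0, 0, Cardinal.aleph0) := by
  -- the set of colors used before stage γ
  set U : Set α := ⋃ β : Set.Iio γ, Set.range (s β.1) with hU
  have hIio : Countable (Set.Iio γ) := by
    have : Cardinal.mk (Set.Iio γ) ≤ Cardinal.aleph0 := by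
      rw [Ordinal.mk_Iio_ordinal]
      exact Cardinal.lift_le_aleph0.mpr hγ
    exact Cardinal.mk_le_aleph0_iff.mp this
  have hUc : U.Countable := by
    apply Set.countable_iUnion
    intro β
    exact Set.countable_range _
  have hcompl : (Uᶜ : Set α).Infinite := by
    by_contra hfin
    rw [Set.not_infinite] at hfin
    have : (Set.univ : Set α).Countable := by
      have := hUc.union hfin.countable
      rwa [Set.union_compl_self] at this
    exact (Set.not_countable_univ) this
  obtain ⟨f⟩ : Nonempty (ℕ ↪ (Uᶜ : Set α)) := by
    rw [Set.infinite_coe_iff.symm] at hcompl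
    exact ⟨Infinite.natEmbedding _⟩
  set c : ℕ → α := fun n => (f n).1 with hc
  set d : ℕ → α := fun n => (f (Equiv.swap 0 1 n)).1 with hd
  have hinjc : Function.Injective c :=
    Subtype.val_injective.comp f.injective
  have hinjd : Function.Injective d :=
    hinjc.comp (Equiv.swap 0 1).injective
  have hne : c ≠ d := by
    intro hcd
    have : c 0 = d 0 := by rw [hcd]
    simp only [hc, hd, Equiv.swap_apply_left] at this
    exact absurd (f.injective (Subtype.val_injective this)) (by norm_num)
  have hdisj : ∀ β < γ, ∀ n m : ℕ, s β n ≠ c m ∧ s β n ≠ d m := by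
    intro β hβ n m
    have hmem : ∀ k : ℕ, (f k).1 ∉ U := fun k => (f k).2
    have hsin : s β n ∈ U := Set.mem_iUnion.mpr ⟨⟨β, hβ⟩, Set.mem_range_self n⟩
    constructor <;> · intro heq; exact hmem _ (heq ▸ hsin)
  exact ⟨c, d, hinjc, hinjd, hne, fun β hβ =>
    ⟨feedback_of_disjoint _ _ fun n m => (hdisj β hβ n m).1,
     feedback_of_disjoint _ _ fun n m => (hdisj β hβ n m).2⟩⟩
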